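/- Let A and B be finite nonempty subsets of the lattice ℤⁿ ⊆ ℝⁿ. Then there exists a finite nonempty subset C of ℤⁿ with A + C = B + C (Minkowski sums of sets) if and only if the convex hulls of A and B in ℝⁿ are equal. -/

import Mathlib

open Pointwise

/-- The coordinatewise cast `ℤⁿ → ℝⁿ` as an additive monoid hom. -/
private def castHom (n : ℕ) : (Fin n → ℤ) →+ (Fin n → ℝ) where
  toFun a := fun i => (a i : ℝ)
  map_zero' := by ext i; simp
  map_add' x y := by ext i; push_cast; simp

private lemma castHom_apply {n : ℕ} (a : Fin n → ℤ) (i : Fin n) :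
    castHom n a i = (a i : ℝ) := rfl

/-- The canonical set `C` of lattice points used for cancellation. -/
private def canonC (n : ℕ) (P : Set (Fin n → ℝ)) : Set (Fin n → ℤ) :=
  {c : Fin n → ℤ | ((n : ℝ) + 1)⁻¹ • castHom n c ∈ P}

private lemma canonC_finite {n : ℕ} {P : Set (Fin n → ℝ)}
    (hP : Bornology.IsBounded P) : (canonC n P).Finite := by
  obtain ⟨M, hM⟩ := isBounded_iff_forall_norm_le.mp hP
  set K : ℝ := ((n : ℝ) + 1) * M with hK
  have hsub : canonC n P ⊆ Set.pi Set.univ (fun _ : Fin n =>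
      Set.Icc (-(⌈K⌉ + 1)) (⌈K⌉ + 1)) := by
    intro c hc
    have hmem : ((n : ℝ) + 1)⁻¹ • castHom n c ∈ P := hc
    have hnorm := hM _ hmem
    intro i _
    have h1 : ‖(((n : ℝ) + 1)⁻¹ • castHom n c) i‖ ≤ M :=
      le_trans (norm_le_pi_norm _ i) hnorm
    have hpos : (0 : ℝ) < (n : ℝ) + 1 := by positivity
    have h2 : |(c i : ℝ)| ≤ K := by
      have : (((n : ℝ) + 1)⁻¹ • castHom n c) i = ((n : ℝ) + 1)⁻¹ * (c i : ℝ) := rfl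
      rw [this, Real.norm_eq_abs, abs_mul, abs_of_pos (inv_pos.mpr hpos)] at h1
      rw [hK]
      calc |(c i : ℝ)| = ((n : ℝ) + 1) * (((n : ℝ) + 1)⁻¹ * |(c i : ℝ)|) := by
            field_simp
        _ ≤ ((n : ℝ) + 1) * M := by
            exact mul_le_mul_of_nonneg_left h1 (le_of_lt hpos)
    have hKc : K ≤ (⌈K⌉ : ℝ) + 1 := le_trans (Int.le_ceil K) (by linarith)
    constructor
    · have : -((⌈K⌉ : ℝ) + 1) ≤ (c i : ℝ) := by
        have := neg_abs_le (c i : ℝ); linarith [h2]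
      exact_mod_cast this
    · have : (c i : ℝ) ≤ (⌈K⌉ : ℝ) + 1 := le_trans (le_abs_self _) (le_trans h2 hKc)
      exact_mod_cast this
  exact Set.Finite.subset (Set.Finite.pi (fun _ => Set.finite_Icc _ _)) hsub

/-- Key lemma: if the convex hull of the image of `F` equals `P`, then
`F + canonC n P` is the set of lattice points `x` with `((n:ℝ)+2)⁻¹ • x ∈ P`. -/
private lemma add_canonC {n : ℕ} (F : Set (Fin n → ℤ))
    (P : Set (Fin n → ℝ)) (hP : convexHull ℝ (castHom n '' F) = P) :
    F + canonC n P = {x : Fin n → ℤ | ((n : ℝ) + 2)⁻¹ • castHom n x ∈ P} := by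
  have hconv : Convex ℝ P := hP ▸ convex_convexHull ℝ _
  have hFP : castHom n '' F ⊆ P := hP ▸ subset_convexHull ℝ _
  have hs : (0 : ℝ) < (n : ℝ) + 1 := by positivity
  have hr : (0 : ℝ) < (n : ℝ) + 2 := by positivity
  apply Set.Subset.antisymm
  · rintro x ⟨a, ha, c, hc, rfl⟩
    have hcP : ((n : ℝ) + 1)⁻¹ • castHom n c ∈ P := hc
    have haP : castHom n a ∈ P := hFP ⟨a, ha, rfl⟩
    have key : ((n : ℝ) + 2)⁻¹ • castHom n (a + c)
        = ((n : ℝ) + 2)⁻¹ • castHom n a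
          + (((n : ℝ) + 1) / ((n : ℝ) + 2)) • (((n : ℝ) + 1)⁻¹ • castHom n c) := by
      rw [map_add, smul_add, smul_smul]
      congr 2
      field_simp
    show ((n : ℝ) + 2)⁻¹ • castHom n (a + c) ∈ P
    rw [key]
    exact hconv haP hcP (by positivity) (by positivity) (by field_simp; ring)
  · intro x hx
    have hy : ((n : ℝ) + 2)⁻¹ • castHom n x ∈ convexHull ℝ (castHom n '' F) := hP ▸ hx
    obtain ⟨ι, hfin, z, w, hzF, hai, hw, hw1, hwz⟩ :=
      eq_pos_convex_span_of_mem_convexHull hy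
    -- the number of points is at most n + 1
    have hcard : Fintype.card ι ≤ n + 1 := by
      have h1 := hai.card_le_finrank_succ
      have h2 : Module.finrank ℝ (vectorSpan ℝ (Set.range z)) ≤ n := by
        have := Submodule.finrank_le (vectorSpan ℝ (Set.range z))
        rwa [Module.finrank_fin_fun] at this
      omega
    -- ι is nonempty
    have hne : Nonempty ι := by
      by_contra h
      rw [not_nonempty_iff] at h
      rw [Finset.univ_eq_empty, Finset.sum_empty] at hw1
      exact one_ne_zero hw1.symm
    -- find an index with large weight
    have hex : ∃ i₀ : ι, 1 ≤ ((n : ℝ) + 2) * w i₀ := by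
      by_contra h
      push_neg at h
      have hlt : ∑ i : ι, ((n : ℝ) + 2) * w i < ∑ _i : ι, (1 : ℝ) :=
        Finset.sum_lt_sum_of_nonempty Finset.univ_nonempty (fun i _ => h i)
      rw [← Finset.mul_sum, hw1, mul_one, Finset.sum_const, Finset.card_univ,
        nsmul_eq_mul, mul_one] at hlt
      have : (Fintype.card ι : ℝ) ≤ (n : ℝ) + 1 := by exact_mod_cast hcard
      linarith
    obtain ⟨i₀, hi₀⟩ := hex
    classical
    obtain ⟨a, haF, haz⟩ := hzF (Set.mem_range_self i₀)
    refine ⟨a, haF, x - a, ?_, by simp⟩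
    -- show x - a ∈ canonC n P
    show ((n : ℝ) + 1)⁻¹ • castHom n (x - a) ∈ P
    have hxz : castHom n x = ∑ i : ι, (((n : ℝ) + 2) * w i) • z i := by
      have : ((n : ℝ) + 2) • (((n : ℝ) + 2)⁻¹ • castHom n x)
          = ((n : ℝ) + 2) • ∑ i : ι, w i • z i := by rw [hwz]
      rw [smul_smul, mul_inv_cancel₀ hr.ne', one_smul, Finset.smul_sum] at this
      rw [this]
      congr 1; ext i; rw [smul_smul]
    -- new weights
    set w' : ι → ℝ := fun i => ((n : ℝ) + 2) * w i - (if i = i₀ then 1 else 0) with hw'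
    have hw'0 : ∀ i ∈ Finset.univ, 0 ≤ ((n : ℝ) + 1)⁻¹ * w' i := by
      intro i _
      apply mul_nonneg (by positivity)
      rw [hw']
      by_cases h : i = i₀
      · subst h; simp; linarith
      · have := mul_nonneg hr.le (hw i).le
        simpa [hw', h] using this
    have hw'sum : ∑ i : ι, ((n : ℝ) + 1)⁻¹ * w' i = 1 := by
      rw [← Finset.mul_sum, hw']
      rw [Finset.sum_sub_distrib, ← Finset.mul_sum, hw1, mul_one]
      rw [Finset.sum_ite_eq' Finset.univ i₀ (fun _ => (1 : ℝ))]
      simp only [Finset.mem_univ, if_true]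
      field_simp
      ring
    have hsum : ((n : ℝ) + 1)⁻¹ • castHom n (x - a)
        = ∑ i : ι, (((n : ℝ) + 1)⁻¹ * w' i) • z i := by
      have hxa : castHom n (x - a) = ∑ i : ι, w' i • z i := by
        have h1 : ∑ i : ι, w' i • z i
            = (∑ i : ι, (((n : ℝ) + 2) * w i) • z i)
              - ∑ i : ι, (if i = i₀ then z i else 0) := by
          rw [← Finset.sum_sub_distrib]
          congr 1; ext i
          by_cases h : i = i₀
          · subst h; simp [hw']; ring
          · simp [hw', h]
        rw [map_sub, hxz, haz, h1, Finset.sum_ite_eq' Finset.univ i₀ z]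
        simp
      rw [hxa, Finset.smul_sum]
      congr 1; ext i; rw [smul_smul]
    rw [hsum]
    exact hconv.sum_mem hw'0 hw'sum (fun i _ => hFP (hzF (Set.mem_range_self i)))

/-- For finite nonempty subsets `A, B ⊆ ℤⁿ`, there exists a finite nonempty subset
`C ⊆ ℤⁿ` with `A + C = B + C` (Minkowski sum) if and only if the convex hulls of
`A` and `B` in `ℝⁿ` coincide. -/
theorem finset_cancellative_iff_convexHull_eq {n : ℕ}
    (A B : Set (Fin n → ℤ)) (hAfin : A.Finite) (hBfin : B.Finite)
    (hA : A.Nonempty) (hB : B.Nonempty) :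
    (∃ C : Set (Fin n → ℤ), C.Finite ∧ C.Nonempty ∧ A + C = B + C) ↔
      convexHull ℝ ((fun (a : Fin n → ℤ) (i : Fin n) => (a i : ℝ)) '' A) =
        convexHull ℝ ((fun (a : Fin n → ℤ) (i : Fin n) => (a i : ℝ)) '' B) := by
  have hfun : (fun (a : Fin n → ℤ) (i : Fin n) => (a i : ℝ)) = ⇑(castHom n) := rfl
  rw [hfun]
  constructor
  · -- forward: A + C = B + C → hulls are equal
    rintro ⟨C, hCfin, hCne, hABC⟩
    -- it suffices to prove one inclusion in a symmetric way
    have main : ∀ A' B' : Set (Fin n → ℤ), A'.Finite → B'.Finite → A' + C = B' + C →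
        castHom n '' A' ⊆ convexHull ℝ (castHom n '' B') := by
      intro A' B' hA'fin hB'fin hsum
      rintro _ ⟨a, haA, rfl⟩
      -- build the iterated sequences
      have step : ∀ c, c ∈ C → ∃ b, b ∈ B' ∧ ∃ c', c' ∈ C ∧ a + c = b + c' := by
        intro c hc
        have : a + c ∈ B' + C := hsum ▸ Set.add_mem_add haA hc
        obtain ⟨b, hb, c', hc', h⟩ := this
        exact ⟨b, hb, c', hc', h.symm⟩
      choose! G hG F hF heq using step
      obtain ⟨c₀, hc₀⟩ := hCne
      set cs : ℕ → (Fin n → ℤ) := fun k => F^[k] c₀ with hcs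
      have hcsC : ∀ k, cs k ∈ C := by
        intro k
        induction k with
        | zero => exact hc₀
        | succ k ih =>
          have : cs (k + 1) = F (cs k) := by
            rw [hcs]; simp [Function.iterate_succ_apply']
          rw [this]; exact hF _ ih
      have hrec : ∀ k, a + cs k = G (cs k) + cs (k + 1) := by
        intro k
        have h1 : cs (k + 1) = F (cs k) := by
          rw [hcs]; simp [Function.iterate_succ_apply']
        rw [h1]; exact heq _ (hcsC k)
      have hGB : ∀ k, G (cs k) ∈ B' := fun k => hG _ (hcsC k)
      -- telescope
      have htel : ∀ k, k • a + c₀ = (∑ i ∈ Finset.range k, G (cs i)) + cs k := by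
        intro k
        induction k with
        | zero => simp [hcs]
        | succ k ih =>
          rw [succ_nsmul, Finset.sum_range_succ]
          calc k • a + a + c₀ = a + (k • a + c₀) := by abel
            _ = a + ((∑ i ∈ Finset.range k, G (cs i)) + cs k) := by rw [ih]
            _ = (∑ i ∈ Finset.range k, G (cs i)) + (a + cs k) := by abel
            _ = (∑ i ∈ Finset.range k, G (cs i)) + (G (cs k) + cs (k + 1)) := by
                rw [hrec k]
            _ = (∑ i ∈ Finset.range k, G (cs i)) + G (cs k) + cs (k + 1) := by abel
      -- pass to ℝ and take limits
      have hclosed : IsClosed (convexHull ℝ (castHom n '' B')) :=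
        (Set.Finite.isCompact_convexHull (𝕜 := ℝ) (hB'fin.image _)).isClosed
      rw [← hclosed.closure_eq]
      rw [Metric.mem_closure_iff]
      intro ε hε
      -- bound on elements of C
      obtain ⟨M, hM⟩ := isBounded_iff_forall_norm_le.mp
        ((hCfin.image (castHom n)).isBounded)
      have hMnn : 0 ≤ M := le_trans (norm_nonneg _) (hM _ ⟨c₀, hc₀, rfl⟩)
      obtain ⟨k, hk⟩ := exists_nat_gt ((2 * M + 1) / ε)
      have hkpos : 0 < (k : ℝ) := by
        have : 0 < (2 * M + 1) / ε := by positivity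
        linarith
      refine ⟨(k : ℝ)⁻¹ • ∑ i ∈ Finset.range k, castHom n (G (cs i)), ?_, ?_⟩
      · -- center of mass lies in the hull
        have : (k : ℝ)⁻¹ • ∑ i ∈ Finset.range k, castHom n (G (cs i))
            = ∑ i ∈ Finset.range k, (k : ℝ)⁻¹ • castHom n (G (cs i)) := by
          rw [Finset.smul_sum]
        rw [this]
        apply (convex_convexHull ℝ _).sum_mem
        · intro i _; positivity
        · rw [Finset.sum_const, Finset.card_range, nsmul_eq_mul,
            mul_inv_cancel₀ hkpos.ne']
        · intro i _
          exact subset_convexHull ℝ _ ⟨G (cs i), hGB i, rfl⟩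
      · -- distance estimate
        have hcast : (k : ℝ) • castHom n a + castHom n c₀
            = (∑ i ∈ Finset.range k, castHom n (G (cs i))) + castHom n (cs k) := by
          have := congrArg (castHom n) (htel k)
          rw [map_add, map_add, map_nsmul, map_sum] at this
          rw [Nat.cast_smul_eq_nsmul]
          exact this
        have hdiff : castHom n a - (k : ℝ)⁻¹ • ∑ i ∈ Finset.range k,
            castHom n (G (cs i)) = (k : ℝ)⁻¹ • (castHom n (cs k) - castHom n c₀) := by
          have hk' : (k : ℝ) ≠ 0 := hkpos.ne'
          refine smul_right_injective (Fin n → ℝ) hk' ?_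
          show (k : ℝ) • _ = (k : ℝ) • _
          rw [smul_sub, smul_inv_smul₀ hk', smul_inv_smul₀ hk',
            sub_eq_sub_iff_add_eq_add, hcast]
          abel
        rw [dist_eq_norm, hdiff, norm_smul, norm_inv, Real.norm_natCast]
        have hbound : ‖castHom n (cs k) - castHom n c₀‖ ≤ 2 * M := by
          calc ‖castHom n (cs k) - castHom n c₀‖
              ≤ ‖castHom n (cs k)‖ + ‖castHom n c₀‖ := norm_sub_le _ _
            _ ≤ M + M := add_le_add (hM _ ⟨cs k, hcsC k, rfl⟩) (hM _ ⟨c₀, hc₀, rfl⟩)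
            _ = 2 * M := by ring
        calc (k : ℝ)⁻¹ * ‖castHom n (cs k) - castHom n c₀‖
            ≤ (k : ℝ)⁻¹ * (2 * M) := by
              exact mul_le_mul_of_nonneg_left hbound (by positivity)
          _ < ε := by
              rw [inv_mul_lt_iff₀ hkpos]
              rw [div_lt_iff₀ hε] at hk
              nlinarith
    apply Set.Subset.antisymm
    · exact convexHull_min (main A B hAfin hBfin hABC) (convex_convexHull ℝ _)
    · exact convexHull_min (main B A hBfin hAfin hABC.symm) (convex_convexHull ℝ _)
  · -- backward: equal hulls → cancellation
    intro h
    set P := convexHull ℝ (castHom n '' A) with hPdef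
    refine ⟨canonC n P, ?_, ?_, ?_⟩
    · exact canonC_finite
        ((Set.Finite.isCompact_convexHull (𝕜 := ℝ) (hAfin.image _)).isBounded)
    · obtain ⟨a, ha⟩ := hA
      refine ⟨fun i => ((n : ℤ) + 1) * a i, ?_⟩
      show ((n : ℝ) + 1)⁻¹ • castHom n (fun i => ((n : ℤ) + 1) * a i) ∈ P
      have : ((n : ℝ) + 1)⁻¹ • castHom n (fun i => ((n : ℤ) + 1) * a i)
          = castHom n a := by
        ext i
        show ((n : ℝ) + 1)⁻¹ * ((((n : ℤ) + 1) * a i : ℤ) : ℝ) = (a i : ℝ)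
        push_cast
        have : ((n : ℝ) + 1) ≠ 0 := by positivity
        field_simp
      rw [this]
      exact subset_convexHull ℝ _ ⟨a, ha, rfl⟩
    · rw [add_canonC A P hPdef.symm, add_canonC B P (hPdef.trans h).symm]
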